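/- Let R be a generalised ray, let X and Y be coarse spaces, and let f₀, f₁ : X → Y be close coarse maps. Then for every coarse map p : X → R there is an elementary coarse homotopy H : I_pX → Y with f₀ = H∘i₀ and f₁ = H∘i₁; in particular, close coarse maps are coarsely homotopic whenever some coarse map X → R exists. -/

import Mathlib

open scoped NNReal

namespace CoarsePaper

variable {X Y : Type*}

/-- Composition `M N = {(x,z) | ∃ y, (x,y) ∈ M ∧ (y,z) ∈ N}` of subsets of `X × X`. -/
def Comp (M N : Set (X × X)) : Set (X × X) :=
  {p | ∃ y, (p.1, y) ∈ M ∧ (y, p.2) ∈ N}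

/-- A collection `c` of subsets of `X × X` (the *controlled sets*) is a coarse structure
if it contains the diagonal and is closed under subsets, finite unions, reflection in the
diagonal, and composition. -/
structure IsCoarseStructure (c : Set (Set (X × X))) : Prop where
  diag_mem : Set.diagonal X ∈ c
  subset_mem : ∀ ⦃M N : Set (X × X)⦄, M ∈ c → N ⊆ M → N ∈ c
  union_mem : ∀ ⦃M N : Set (X × X)⦄, M ∈ c → N ∈ c → M ∪ N ∈ c
  swap_mem : ∀ ⦃M : Set (X × X)⦄, M ∈ c → Prod.swap '' M ∈ c
  comp_mem : ∀ ⦃M N : Set (X × X)⦄, M ∈ c → N ∈ c → Comp M N ∈ c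

/-- A set `B ⊆ X` is bounded if `B = M_x = {y | (x,y) ∈ M}` for some controlled `M` and
some point `x`. -/
def IsBounded (c : Set (Set (X × X))) (B : Set X) : Prop :=
  ∃ M ∈ c, ∃ x : X, B = {y | (x, y) ∈ M}

/-- Two maps `f g : S → X` into a coarse space are close if `{(f s, g s) | s ∈ S}` is
controlled. -/
def Close {S : Type*} (c : Set (Set (X × X))) (f g : S → X) : Prop :=
  {p : X × X | ∃ s, p = (f s, g s)} ∈ c

/-- A map between coarse spaces is a coarse map if images of controlled sets are controlled
and preimages of bounded sets are bounded. -/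
def IsCoarseMap (cX : Set (Set (X × X))) (cY : Set (Set (Y × Y))) (f : X → Y) : Prop :=
  (∀ M ∈ cX, (fun p : X × X => (f p.1, f p.2)) '' M ∈ cY) ∧
    ∀ B : Set Y, IsBounded cY B → IsBounded cX (f ⁻¹' B)

/-- A coarse structure on a topological space is compatible with the topology if every
controlled set is contained in an open controlled set and the closure of every bounded set
is compact. -/
def Compatible [TopologicalSpace X] (c : Set (Set (X × X))) : Prop :=
  (∀ M ∈ c, ∃ U ∈ c, IsOpen U ∧ M ⊆ U) ∧
    ∀ B : Set X, IsBounded c B → IsCompact (closure B)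

/-- The coarse structure on the space `[0,∞) = ℝ≥0` making it a generalised ray:
a coarse structure compatible with the topology, closed under sums `M + N`, under the
squeezing operation `Mˢ`, and under translations `a + M`. -/
structure IsGeneralisedRay (c : Set (Set (ℝ≥0 × ℝ≥0))) : Prop where
  coarse : IsCoarseStructure c
  compatible : Compatible c
  sum_mem : ∀ ⦃M N : Set (ℝ≥0 × ℝ≥0)⦄, M ∈ c → N ∈ c →
    {p : ℝ≥0 × ℝ≥0 | ∃ u v x y, (u, v) ∈ M ∧ (x, y) ∈ N ∧ p = (u + x, v + y)} ∈ c
  squeeze_mem : ∀ ⦃M : Set (ℝ≥0 × ℝ≥0)⦄, M ∈ c →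
    {p : ℝ≥0 × ℝ≥0 | ∃ x y, (x, y) ∈ M ∧ x ≤ p.1 ∧ p.1 ≤ y ∧ x ≤ p.2 ∧ p.2 ≤ y} ∈ c
  translate_mem : ∀ (a : ℝ≥0) ⦃M : Set (ℝ≥0 × ℝ≥0)⦄, M ∈ c →
    {p : ℝ≥0 × ℝ≥0 | ∃ x y, (x, y) ∈ M ∧ p = (a + x, a + y)} ∈ c

/-- The bounded coarse structure of a (pseudo)metric space: a set is controlled iff it is
contained in some neighbourhood of the diagonal `{(x,y) | dist x y < r}`, `r > 0`. -/
def metricC (X : Type*) [PseudoMetricSpace X] : Set (Set (X × X)) :=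
  {M | ∃ r : ℝ, 0 < r ∧ M ⊆ {p : X × X | dist p.1 p.2 < r}}

/-- The product coarse structure on `X × Y`: a set is controlled iff it is contained in
`{((u,v),(x,y)) | (u,x) ∈ M₁, (v,y) ∈ M₂}` for controlled `M₁ ⊆ X × X`, `M₂ ⊆ Y × Y`. -/
def prodC (cX : Set (Set (X × X))) (cY : Set (Set (Y × Y))) :
    Set (Set ((X × Y) × (X × Y))) :=
  {M | ∃ M₁ ∈ cX, ∃ M₂ ∈ cY,
    M ⊆ {p : (X × Y) × (X × Y) | (p.1.1, p.2.1) ∈ M₁ ∧ (p.1.2, p.2.2) ∈ M₂}}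

/-- The subspace coarse structure on `A ⊆ X`: the controlled sets are (identified with)
the controlled sets of `X` contained in `A × A`. -/
def subC (cX : Set (Set (X × X))) (A : Set X) : Set (Set (↥A × ↥A)) :=
  {M : Set (↥A × ↥A) | (fun p : ↥A × ↥A => ((p.1 : X), (p.2 : X))) '' M ∈ cX}

/-- The `p`-cylinder `I_pX = {(x,t) ∈ X × R | t ≤ p(x) + 1}`. -/
def cyl (p : X → ℝ≥0) : Set (X × ℝ≥0) := {q | q.2 ≤ p q.1 + 1}

/-- The bottom inclusion `i₀ : X → I_pX`, `i₀(x) = (x, 0)`. -/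
def i0 (p : X → ℝ≥0) (x : X) : ↥(cyl p) := ⟨(x, 0), by simp [cyl]⟩

/-- The top inclusion `i₁ : X → I_pX`, `i₁(x) = (x, p(x) + 1)`. -/
def i1 (p : X → ℝ≥0) (x : X) : ↥(cyl p) := ⟨(x, p x + 1), by simp [cyl]⟩

/-- In a generalised ray, the "column over zero" `{(0,t) : t ≤ c}` is controlled. -/
lemma zero_col {cR : Set (Set (ℝ≥0 × ℝ≥0))} (hR : IsGeneralisedRay cR) (c : ℝ≥0) :
    {q : ℝ≥0 × ℝ≥0 | q.1 = 0 ∧ q.2 ≤ c} ∈ cR := by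
  obtain ⟨U, hU, hUopen, hdiag⟩ := hR.compatible.1 _ hR.coarse.diag_mem
  have h00 : ((0, 0) : ℝ≥0 × ℝ≥0) ∈ U := hdiag rfl
  obtain ⟨ε, hε, hball⟩ := Metric.isOpen_iff.1 hUopen _ h00
  set δ : ℝ≥0 := ⟨ε / 2, by linarith⟩ with hδdef
  have hδpos : 0 < δ := by
    rw [← NNReal.coe_lt_coe]
    show (0 : ℝ) < ε / 2
    linarith
  have hSδ : {q : ℝ≥0 × ℝ≥0 | q.1 = 0 ∧ q.2 ≤ δ} ∈ cR := by
    refine hR.coarse.subset_mem hU ?_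
    rintro ⟨a, b⟩ ⟨ha, hb⟩
    apply hball
    rw [Metric.mem_ball]
    have hd : dist ((a, b) : ℝ≥0 × ℝ≥0) (0, 0) = max (dist a 0) (dist b 0) :=
      Prod.dist_eq
    rw [hd]
    have h1 : dist a 0 = (a : ℝ) := by
      rw [NNReal.dist_eq]; simp
    have h2 : dist b 0 = (b : ℝ) := by
      rw [NNReal.dist_eq]; simp
    rw [h1, h2]
    have ha0 : a = 0 := ha
    have hb' : (b : ℝ) ≤ ε / 2 := hb
    rw [ha0]
    apply max_lt <;> [simpa using hε; linarith]
  have hn : ∀ n : ℕ, {q : ℝ≥0 × ℝ≥0 | q.1 = 0 ∧ q.2 ≤ (n : ℝ≥0) * δ} ∈ cR := by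
    intro n
    induction n with
    | zero =>
      refine hR.coarse.subset_mem hR.coarse.diag_mem ?_
      rintro ⟨a, b⟩ ⟨ha, hb⟩
      simp only [Nat.cast_zero, zero_mul, le_zero_iff] at hb
      show a = b
      rw [show a = 0 from ha, hb]
    | succ n ih =>
      refine hR.coarse.subset_mem (hR.sum_mem ih hSδ) ?_
      rintro ⟨a, b⟩ ⟨ha, hb⟩
      refine ⟨0, min b ((n : ℝ≥0) * δ), 0, b - min b ((n : ℝ≥0) * δ),
        ⟨rfl, min_le_right _ _⟩, ⟨rfl, ?_⟩, ?_⟩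
      · rcases le_total b ((n : ℝ≥0) * δ) with h | h
        · simp [min_eq_left h]
        · rw [min_eq_right h]
          have hbb : b ≤ (n : ℝ≥0) * δ + δ := by
            calc b ≤ ((n + 1 : ℕ) : ℝ≥0) * δ := hb
            _ = (n : ℝ≥0) * δ + δ := by push_cast; ring
          exact tsub_le_iff_left.2 hbb
      · have hmin : min b ((n : ℝ≥0) * δ) + (b - min b ((n : ℝ≥0) * δ)) = b :=
          add_tsub_cancel_of_le (min_le_left _ _)
        have ha0 : a = 0 := ha
        simp [ha0, hmin]
  obtain ⟨n, hnc⟩ : ∃ n : ℕ, c ≤ (n : ℝ≥0) * δ := by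
    obtain ⟨n, hn'⟩ := exists_nat_ge (c / δ)
    exact ⟨n, (div_le_iff₀ hδpos).1 hn'⟩
  exact hR.coarse.subset_mem (hn n) fun q hq => ⟨hq.1, hq.2.trans hnc⟩

/-- Let `R` be a generalised ray, `X`, `Y` coarse spaces and
`f₀, f₁ : X → Y` close coarse maps.  Then for every coarse map `p : X → R` there is an
elementary coarse homotopy `H : I_pX → Y` with `f₀ = H ∘ i₀` and `f₁ = H ∘ i₁`; in
particular close coarse maps are coarsely homotopic whenever some coarse map `X → R`
exists. -/
theorem close_coarse_maps_elementary_homotopy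
    {X Y : Type*} (cX : Set (Set (X × X))) (hX : IsCoarseStructure cX)
    (cY : Set (Set (Y × Y))) (hY : IsCoarseStructure cY)
    (cR : Set (Set (ℝ≥0 × ℝ≥0))) (hR : IsGeneralisedRay cR)
    (f₀ f₁ : X → Y)
    (hf₀ : IsCoarseMap cX cY f₀) (hf₁ : IsCoarseMap cX cY f₁)
    (hclose : Close cY f₀ f₁)
    (p : X → ℝ≥0) (hp : IsCoarseMap cX cR p) :
    ∃ H : ↥(cyl p) → Y,
      IsCoarseMap (subC (prodC cX cR) (cyl p)) cY H ∧
        (∀ x : X, H (i0 p x) = f₀ x) ∧ (∀ x : X, H (i1 p x) = f₁ x) := by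
  classical
  set E : Set (Y × Y) := {q : Y × Y | ∃ s, q = (f₀ s, f₁ s)} with hE
  have hEc : E ∈ cY := hclose
  set H : ↥(cyl p) → Y :=
    fun z => if (z : X × ℝ≥0).2 = p (z : X × ℝ≥0).1 + 1
      then f₁ (z : X × ℝ≥0).1 else f₀ (z : X × ℝ≥0).1 with hH
  refine ⟨H, ⟨?_, ?_⟩, ?_, ?_⟩
  · -- images of controlled sets are controlled
    intro M hM
    obtain ⟨M₁, hM₁, M₂, hM₂, hsub⟩ := hM
    set A₀ : Set (Y × Y) := (fun q : X × X => (f₀ q.1, f₀ q.2)) '' M₁ with hA₀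
    set A₁ : Set (Y × Y) := (fun q : X × X => (f₁ q.1, f₁ q.2)) '' M₁ with hA₁
    have hA₀c : A₀ ∈ cY := hf₀.1 M₁ hM₁
    have hA₁c : A₁ ∈ cY := hf₁.1 M₁ hM₁
    have hT : A₀ ∪ A₁ ∪ Comp A₀ E ∪ Comp (Prod.swap '' E) A₀ ∈ cY :=
      hY.union_mem (hY.union_mem (hY.union_mem hA₀c hA₁c) (hY.comp_mem hA₀c hEc))
        (hY.comp_mem (hY.swap_mem hEc) hA₀c)
    refine hY.subset_mem hT ?_
    rintro _ ⟨⟨z, w⟩, hzw, rfl⟩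
    have hmem : ((z : X × ℝ≥0), (w : X × ℝ≥0)) ∈
        (fun q : ↥(cyl p) × ↥(cyl p) => ((q.1 : X × ℝ≥0), (q.2 : X × ℝ≥0))) '' M :=
      ⟨(z, w), hzw, rfl⟩
    have hx : ((z : X × ℝ≥0).1, (w : X × ℝ≥0).1) ∈ M₁ := (hsub hmem).1
    by_cases hz : (z : X × ℝ≥0).2 = p (z : X × ℝ≥0).1 + 1 <;>
      by_cases hw : (w : X × ℝ≥0).2 = p (w : X × ℝ≥0).1 + 1
    · -- (f₁, f₁)
      simp only [hH, hz, hw, if_pos rfl, if_true]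
      exact Or.inl (Or.inl (Or.inr ⟨_, hx, rfl⟩))
    · -- (f₁, f₀) ∈ Comp (swap E) A₀
      simp only [hH, if_pos hz, if_neg hw]
      exact Or.inr ⟨f₀ (z : X × ℝ≥0).1, ⟨(f₀ _, f₁ _), ⟨_, rfl⟩, rfl⟩, ⟨_, hx, rfl⟩⟩
    · -- (f₀, f₁) ∈ Comp A₀ E
      simp only [hH, if_neg hz, if_pos hw]
      exact Or.inl (Or.inr ⟨f₀ (w : X × ℝ≥0).1, ⟨_, hx, rfl⟩, ⟨_, rfl⟩⟩)
    · -- (f₀, f₀)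
      simp only [hH, if_neg hz, if_neg hw]
      exact Or.inl (Or.inl (Or.inl ⟨_, hx, rfl⟩))
  · -- preimages of bounded sets are bounded
    rintro B ⟨N, hN, y₀, rfl⟩
    set B' : Set Y := {y | (y₀, y) ∈ N ∪ Comp N (Prod.swap '' E)} with hB'def
    have hB' : IsBounded cY B' :=
      ⟨N ∪ Comp N (Prod.swap '' E),
        hY.union_mem hN (hY.comp_mem hN (hY.swap_mem hEc)), y₀, rfl⟩
    obtain ⟨MX, hMX, x₀, hMXeq⟩ := hf₀.2 B' hB'
    -- a bound for p on the bounded set MX_{x₀}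
    have hMX' : MX ∩ {q : X × X | q.1 = x₀} ∈ cX :=
      hX.subset_mem hMX Set.inter_subset_left
    have hpimg : (fun q : X × X => (p q.1, p q.2)) '' (MX ∩ {q : X × X | q.1 = x₀}) ∈ cR :=
      hp.1 _ hMX'
    have hbd : IsBounded cR
        {t | (p x₀, t) ∈ (fun q : X × X => (p q.1, p q.2)) '' (MX ∩ {q : X × X | q.1 = x₀})} :=
      ⟨_, hpimg, p x₀, rfl⟩
    have hcpt := hR.compatible.2 _ hbd
    obtain ⟨c, hc⟩ := hcpt.bddAbove
    have hpc : ∀ x : X, (x₀, x) ∈ MX → p x ≤ c := by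
      intro x hx
      refine hc (subset_closure ?_)
      exact ⟨(x₀, x), ⟨hx, rfl⟩, rfl⟩
    -- the column of the cylinder over the bounded set MX_{x₀}
    set z₀ : ↥(cyl p) := ⟨(x₀, 0), by simp [cyl]⟩ with hz₀
    refine ⟨{q : ↥(cyl p) × ↥(cyl p) | q.1 = z₀ ∧ q.2 ∈ H ⁻¹' {y | (y₀, y) ∈ N}}, ?_, z₀, ?_⟩
    · -- this set is controlled in the subspace structure
      refine ⟨MX, hMX, {q : ℝ≥0 × ℝ≥0 | q.1 = 0 ∧ q.2 ≤ c + 1}, zero_col hR (c + 1), ?_⟩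
      rintro _ ⟨⟨z, w⟩, ⟨hz, hw⟩, rfl⟩
      have hw1 : f₀ (w : X × ℝ≥0).1 ∈ B' := by
        by_cases htop : (w : X × ℝ≥0).2 = p (w : X × ℝ≥0).1 + 1
        · have : f₁ (w : X × ℝ≥0).1 ∈ {y | (y₀, y) ∈ N} := by
            have := hw
            simp only [Set.mem_preimage, hH, if_pos htop] at this
            exact this
          exact Or.inr ⟨f₁ (w : X × ℝ≥0).1, this, ⟨(f₀ _, f₁ _), ⟨_, rfl⟩, rfl⟩⟩
        · have : f₀ (w : X × ℝ≥0).1 ∈ {y | (y₀, y) ∈ N} := by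
            have := hw
            simp only [Set.mem_preimage, hH, if_neg htop] at this
            exact this
          exact Or.inl this
      have hwMX : (x₀, (w : X × ℝ≥0).1) ∈ MX := by
        have : (w : X × ℝ≥0).1 ∈ f₀ ⁻¹' B' := hw1
        rw [hMXeq] at this
        exact this
      have hz' : z = z₀ := hz
      subst hz'
      constructor
      · exact hwMX
      · refine ⟨rfl, ?_⟩
        have hcyl : (w : X × ℝ≥0).2 ≤ p (w : X × ℝ≥0).1 + 1 := w.2
        exact hcyl.trans (add_le_add_left (hpc _ hwMX) 1)
    · -- it cuts out exactly the preimage at the basepoint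
      ext w
      simp only [Set.mem_setOf_eq, true_and]
  · intro x
    have h0 : ¬((0 : ℝ≥0) = p x + 1) := by
      intro h
      exact (by simp : (p x + 1 : ℝ≥0) ≠ 0) h.symm
    simp only [hH, i0, if_neg h0]
  · intro x
    simp only [hH, i1, if_pos rfl]

end CoarsePaper
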